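/- Let ν be a non-Archimedean absolute value on ℝ extending the 2-adic absolute value on ℚ. Define Xⱼ = {x ∈ S² : ν(xⱼ) > ν(x_k) for all k ≠ j} and Yⱼ = {x ∈ S² : ν(xⱼ) ≥ ν(x_k) for all k ≠ j}. Then for any x ∈ Xⱼ and y ∈ Yⱼ, x·y ≠ 0. -/

import Mathlib

theorem stmt_16 (ν : ℝ → ℝ)
    (hnn : ∀ a, 0 ≤ ν a)
    (hmul : ∀ a b, ν (a * b) = ν a * ν b)
    (hadd : ∀ a b, ν (a + b) ≤ max (ν a) (ν b))
    (hzero : ∀ a, ν a = 0 ↔ a = 0)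
    (hext : ∀ q : ℚ, ν (q : ℝ) = (padicNorm 2 q : ℝ))
    (X Y : Fin 3 → Set (EuclideanSpace ℝ (Fin 3)))
    (hX : ∀ j, X j = {x | ‖x‖ = 1 ∧ ∀ k, k ≠ j → ν (x j) > ν (x k)})
    (hY : ∀ j, Y j = {x | ‖x‖ = 1 ∧ ∀ k, k ≠ j → ν (x j) ≥ ν (x k)}) :
    ∀ j, ∀ x ∈ X j, ∀ y ∈ Y j, (inner ℝ x y : ℝ) ≠ 0 := by
  have hone : ν 1 = 1 := by
    have h := hmul 1 1
    rw [one_mul] at h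
    have h1 : ν 1 ≠ 0 := fun h0 => one_ne_zero ((hzero 1).mp h0)
    have h' : ν 1 * 1 = ν 1 * ν 1 := by rw [mul_one]; exact h
    exact (mul_left_cancel₀ h1 h').symm
  have hneg : ∀ a : ℝ, ν (-a) = ν a := by
    intro a
    have h := hmul (-1) (-1)
    rw [neg_mul_neg, one_mul, hone] at h
    have hm1 : ν (-1) = 1 := by nlinarith [hnn (-1)]
    have := hmul (-1) a
    rw [hm1, one_mul] at this
    rw [← this, neg_one_mul]
  -- key lemma
  have key : ∀ a b c : ℝ, ν b < ν a → ν c < ν a → a + b + c ≠ 0 := by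
    intro a b c hb hc h
    have ha : a = -(b + c) := by linarith
    have : ν a ≤ max (ν b) (ν c) := by
      rw [ha, hneg]; exact hadd b c
    rcases max_cases (ν b) (ν c) with ⟨h1, _⟩ | ⟨h1, _⟩ <;> linarith
  intro j x hx y hy
  rw [hX] at hx; rw [hY] at hy
  obtain ⟨hxn, hxj⟩ := hx
  obtain ⟨hyn, hyj⟩ := hy
  -- ν (x j) > 0
  have hxpos : 0 < ν (x j) := by
    have hk : ∃ k : Fin 3, k ≠ j := by
      fin_cases j
      · exact ⟨1, by decide⟩
      · exact ⟨0, by decide⟩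
      · exact ⟨0, by decide⟩
    obtain ⟨k, hk⟩ := hk
    exact lt_of_le_of_lt (hnn (x k)) (hxj k hk)
  have hypos : 0 < ν (y j) := by
    rcases (hnn (y j)).lt_or_eq with h | h
    · exact h
    · exfalso
      have hy0 : ∀ k : Fin 3, y k = 0 := by
        intro k
        by_cases hkj : k = j
        · rw [hkj, ← hzero, ← h]
        · have := hyj k hkj
          have := hnn (y k)
          exact (hzero (y k)).mp (le_antisymm (by linarith) (hnn (y k)))
      have : y = 0 := by
        ext k
        simp [hy0 k]
      rw [this] at hyn
      simp at hyn
  have hsmall : ∀ k : Fin 3, k ≠ j → ν (x k * y k) < ν (x j * y j) := by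
    intro k hk
    rw [hmul, hmul]
    have h1 := hxj k hk
    have h2 := hyj k hk
    have h3 := hnn (x k)
    have h4 := hnn (y k)
    nlinarith
  have hinner : (inner ℝ x y : ℝ) = ∑ i : Fin 3, x i * y i := by
    simp [PiLp.inner_apply, mul_comm]
  rw [hinner, Fin.sum_univ_three]
  fin_cases j
  · have h1 := hsmall 1 (by decide)
    have h2 := hsmall 2 (by decide)
    intro h
    exact key (x 0 * y 0) (x 1 * y 1) (x 2 * y 2) h1 h2 (by linarith)
  · have h1 := hsmall 0 (by decide)
    have h2 := hsmall 2 (by decide)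
    intro h
    exact key (x 1 * y 1) (x 0 * y 0) (x 2 * y 2) h1 h2 (by linarith)
  · have h1 := hsmall 0 (by decide)
    have h2 := hsmall 1 (by decide)
    intro h
    exact key (x 2 * y 2) (x 0 * y 0) (x 1 * y 1) h1 h2 (by linarith)
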